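/- For all positive integers n and nonnegative integers k, ∑_{m=n}^{2n-1} (-1)^{m-n} * C(m-n, k) * N_{n,m} = (-1)^k * d_{n,k}, where N_{n,m} = (1/n) * C(3n, n+1+m) * C(m-1, n-1) and d_{n,k} = (1/n) * C(n-1+k, n-1) * C(2n-k, n+1). -/

import Mathlib

/-- Key lemma: partial alternating Vandermonde-type convolution,
  `∑_{i=0}^r (-1)^i C(b+i, i) C(b+1+c, r-i) = C(c, r)`. -/
lemma key_conv : ∀ (b c r : ℕ),
    ∑ i ∈ Finset.range (r + 1),
      (-1 : ℚ) ^ i * (Nat.choose (b + i) i) * (Nat.choose (b + 1 + c) (r - i))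
      = Nat.choose c r := by
  intro b
  induction b with
  | zero =>
    intro c r
    induction r with
    | zero => simp
    | succ r ih =>
      rw [Finset.sum_range_succ' (fun i => (-1 : ℚ) ^ i * (Nat.choose (0 + i) i) *
          (Nat.choose (0 + 1 + c) (r + 1 - i)))]
      simp only [Nat.zero_add, Nat.choose_self, Nat.cast_one, mul_one] at ih ⊢
      have h1 : ∑ i ∈ Finset.range (r + 1),
          (-1 : ℚ) ^ (i + 1) * (Nat.choose (1 + c) (r + 1 - (i + 1)))
          = - ∑ i ∈ Finset.range (r + 1),
              (-1 : ℚ) ^ i * (Nat.choose (1 + c) (r - i)) := by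
        rw [← Finset.sum_neg_distrib]
        apply Finset.sum_congr rfl
        intro i _
        have : r + 1 - (i + 1) = r - i := by omega
        rw [this]; ring
      rw [h1, ih]
      have := Nat.choose_succ_succ c r
      have hc : ((1 + c).choose (r + 1) : ℚ) = (c.choose r : ℚ) + (c.choose (r + 1) : ℚ) := by
        rw [Nat.add_comm 1 c]
        exact_mod_cast congrArg (Nat.cast : ℕ → ℚ) this
      simp only [pow_zero, one_mul, Nat.sub_zero]
      rw [hc]; ring
  | succ b ihb =>
    intro c r
    induction r with
    | zero => simp
    | succ r ih =>
      -- U = ∑_{i<r+2} (-1)^i C(b+1+i,i) C(b+2+c, r+1-i)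
      -- peel i = 0 and use Pascal on C(b+2+i, i+1)
      rw [Finset.sum_range_succ' (fun i => (-1 : ℚ) ^ i * (Nat.choose (b + 1 + i) i) *
          (Nat.choose (b + 1 + 1 + c) (r + 1 - i)))]
      have hsplit : ∑ i ∈ Finset.range (r + 1),
          (-1 : ℚ) ^ (i + 1) * (Nat.choose (b + 1 + (i + 1)) (i + 1)) *
            (Nat.choose (b + 1 + 1 + c) (r + 1 - (i + 1)))
          = (∑ i ∈ Finset.range (r + 1),
              (-1 : ℚ) ^ (i + 1) * (Nat.choose (b + 1 + i) i) *
                (Nat.choose (b + 1 + 1 + c) (r - i)))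
            + (∑ i ∈ Finset.range (r + 1),
              (-1 : ℚ) ^ (i + 1) * (Nat.choose (b + 1 + i) (i + 1)) *
                (Nat.choose (b + 1 + 1 + c) (r - i))) := by
        rw [← Finset.sum_add_distrib]
        apply Finset.sum_congr rfl
        intro i _
        have h2 : r + 1 - (i + 1) = r - i := by omega
        have h3 : b + 1 + (i + 1) = (b + 1 + i) + 1 := by omega
        rw [h2, h3, Nat.choose_succ_succ]
        push_cast
        ring
      rw [hsplit]
      -- first sum is -(inner IH sum) = -C(c, r)
      have hA : ∑ i ∈ Finset.range (r + 1),
          (-1 : ℚ) ^ (i + 1) * (Nat.choose (b + 1 + i) i) *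
            (Nat.choose (b + 1 + 1 + c) (r - i))
          = -(c.choose r : ℚ) := by
        rw [← ih, ← Finset.sum_neg_distrib]
        apply Finset.sum_congr rfl
        intro i _
        ring
      -- second sum: compare with ihb at (c+1, r+1), peeled
      have hB : ∑ i ∈ Finset.range (r + 1),
          (-1 : ℚ) ^ (i + 1) * (Nat.choose (b + 1 + i) (i + 1)) *
            (Nat.choose (b + 1 + 1 + c) (r - i))
          = ((c + 1).choose (r + 1) : ℚ) - (Nat.choose (b + 1 + 1 + c) (r + 1)) := by
        have h4 := ihb (c + 1) (r + 1)
        rw [Finset.sum_range_succ' (fun i => (-1 : ℚ) ^ i * (Nat.choose (b + i) i) *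
            (Nat.choose (b + 1 + (c + 1)) (r + 1 - i)))] at h4
        have h5 : ∑ i ∈ Finset.range (r + 1),
            (-1 : ℚ) ^ (i + 1) * (Nat.choose (b + (i + 1)) (i + 1)) *
              (Nat.choose (b + 1 + (c + 1)) (r + 1 - (i + 1)))
            = ∑ i ∈ Finset.range (r + 1),
              (-1 : ℚ) ^ (i + 1) * (Nat.choose (b + 1 + i) (i + 1)) *
                (Nat.choose (b + 1 + 1 + c) (r - i)) := by
          apply Finset.sum_congr rfl
          intro i _
          have e1 : b + (i + 1) = b + 1 + i := by omega
          have e2 : r + 1 - (i + 1) = r - i := by omega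
          have e3 : b + 1 + (c + 1) = b + 1 + 1 + c := by omega
          rw [e1, e2, e3]
        rw [h5] at h4
        have e4 : b + 1 + (c + 1) = b + 1 + 1 + c := by omega
        rw [e4] at h4
        simp only [pow_zero, Nat.choose_zero_right, Nat.cast_one, one_mul, mul_one,
          Nat.sub_zero] at h4
        linarith [h4]
      rw [hA, hB]
      simp only [pow_zero, Nat.choose_zero_right, Nat.cast_one, one_mul, mul_one,
        Nat.sub_zero]
      have := Nat.choose_succ_succ c r
      have hc : ((c + 1).choose (r + 1) : ℚ) = (c.choose r : ℚ) + (c.choose (r + 1) : ℚ) := by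
        exact_mod_cast congrArg (Nat.cast : ℕ → ℚ) this
      rw [hc]; ring

theorem stmt_11 (n k : ℕ) (hn : 0 < n) :
    ∑ m ∈ Finset.Icc n (2 * n - 1),
      (-1 : ℚ) ^ (m - n) * (Nat.choose (m - n) k) *
        ((1 / n) * (Nat.choose (3 * n) (n + 1 + m)) * (Nat.choose (m - 1) (n - 1)))
      = (-1 : ℚ) ^ k *
          ((1 / n) * (Nat.choose (n - 1 + k) (n - 1)) * (Nat.choose (2 * n - k) (n + 1))) := by
  -- reduce to the identity without the 1/n factor
  have main : ∑ j ∈ Finset.range n,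
      (-1 : ℚ) ^ j * (Nat.choose j k) *
        ((Nat.choose (3 * n) (2 * n + 1 + j)) * (Nat.choose (n - 1 + j) (n - 1)))
      = (-1 : ℚ) ^ k *
          ((Nat.choose (n - 1 + k) (n - 1)) * (Nat.choose (2 * n - k) (n + 1))) := by
    by_cases hk : n ≤ k
    · -- all terms vanish
      rw [Finset.sum_eq_zero, eq_comm]
      · have h1 : Nat.choose (2 * n - k) (n + 1) = 0 :=
          Nat.choose_eq_zero_of_lt (by omega)
        rw [h1]; simp
      · intro j hj
        simp only [Finset.mem_range] at hj
        rw [Nat.choose_eq_zero_of_lt (by omega : j < k)]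
        simp
    · push_neg at hk
      obtain ⟨r, rfl⟩ : ∃ r, n = k + r + 1 := ⟨n - k - 1, by omega⟩
      -- drop vanishing initial terms, reindex j = k + i
      rw [Finset.range_eq_Ico, ← Finset.sum_Ico_consecutive _ (by omega : 0 ≤ k)
          (by omega : k ≤ k + r + 1)]
      rw [Finset.sum_eq_zero (fun j hj => by
        simp only [Finset.mem_Ico] at hj
        rw [Nat.choose_eq_zero_of_lt (by omega : j < k)]
        simp), zero_add]
      rw [Finset.sum_Ico_eq_sum_range]
      have hrange : k + r + 1 - k = r + 1 := by omega
      rw [hrange]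
      have hterm : ∀ i ∈ Finset.range (r + 1),
          (-1 : ℚ) ^ (k + i) * (Nat.choose (k + i) k) *
            ((Nat.choose (3 * (k + r + 1)) (2 * (k + r + 1) + 1 + (k + i))) *
              (Nat.choose (k + r + 1 - 1 + (k + i)) (k + r + 1 - 1)))
          = (-1 : ℚ) ^ k * (Nat.choose (2 * k + r) (k + r)) *
              ((-1 : ℚ) ^ i * (Nat.choose (2 * k + r + i) i) *
                (Nat.choose (2 * k + r + 1 + (k + 2 * r + 2)) (r - i))) := by
        intro i hi
        simp only [Finset.mem_range] at hi
        have hi' : i ≤ r := by omega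
        -- binomial symmetry on the big one
        have e1 : 2 * (k + r + 1) + 1 + (k + i) = 3 * k + 2 * r + 3 + i := by omega
        have e2 : 3 * (k + r + 1) = 3 * k + 3 * r + 3 := by omega
        have e3 : k + r + 1 - 1 + (k + i) = 2 * k + r + i := by omega
        have e4 : k + r + 1 - 1 = k + r := by omega
        have e5 : 2 * k + r + 1 + (k + 2 * r + 2) = 3 * k + 3 * r + 3 := by omega
        rw [e1, e2, e3, e4, e5]
        have hsymm : Nat.choose (3 * k + 3 * r + 3) (3 * k + 2 * r + 3 + i)
            = Nat.choose (3 * k + 3 * r + 3) (r - i) := by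
          rw [← Nat.choose_symm (by omega : 3 * k + 2 * r + 3 + i ≤ 3 * k + 3 * r + 3)]
          congr 1
          omega
        rw [hsymm]
        -- trinomial revision
        have htri : Nat.choose (k + i) k * Nat.choose (2 * k + r + i) (k + r)
            = Nat.choose (2 * k + r + i) i * Nat.choose (2 * k + r) (k + r) := by
          have := Nat.choose_mul (n := 2 * k + r + i) (k := 2 * k + r) (s := k + r)
            (by omega)
          have hs : Nat.choose (2 * k + r + i) (2 * k + r)
              = Nat.choose (2 * k + r + i) i := by
            rw [← Nat.choose_symm (by omega : 2 * k + r ≤ 2 * k + r + i)]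
            congr 1
            omega
          have e6 : 2 * k + r + i - (k + r) = k + i := by omega
          have e7 : 2 * k + r - (k + r) = k := by omega
          rw [e6, e7, hs] at this
          rw [mul_comm]
          exact this.symm
        have htriQ : ((k + i).choose k : ℚ) * ((2 * k + r + i).choose (k + r) : ℚ)
            = ((2 * k + r + i).choose i : ℚ) * ((2 * k + r).choose (k + r) : ℚ) := by
          exact_mod_cast congrArg (Nat.cast : ℕ → ℚ) htri
        rw [pow_add]
        linear_combination ((-1 : ℚ) ^ k * (-1 : ℚ) ^ i *
          ((3 * k + 3 * r + 3).choose (r - i) : ℚ)) * htriQ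
      rw [Finset.sum_congr rfl hterm, ← Finset.mul_sum]
      rw [key_conv (2 * k + r) (k + 2 * r + 2) r]
      have e8 : k + r + 1 - 1 + k = 2 * k + r := by omega
      have e9 : k + r + 1 - 1 = k + r := by omega
      have e10 : 2 * (k + r + 1) - k = k + 2 * r + 2 := by omega
      have e11 : k + r + 1 + 1 = k + r + 2 := by omega
      rw [e8, e9, e10, e11]
      have hs2 : Nat.choose (k + 2 * r + 2) r = Nat.choose (k + 2 * r + 2) (k + r + 2) := by
        rw [← Nat.choose_symm (by omega : k + r + 2 ≤ k + 2 * r + 2)]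
        congr 1
        omega
      rw [hs2]
      ring
  -- now convert the Icc sum to the range sum
  have hIcc : ∑ m ∈ Finset.Icc n (2 * n - 1),
      (-1 : ℚ) ^ (m - n) * (Nat.choose (m - n) k) *
        ((1 / n) * (Nat.choose (3 * n) (n + 1 + m)) * (Nat.choose (m - 1) (n - 1)))
      = (1 / n : ℚ) * ∑ j ∈ Finset.range n,
          (-1 : ℚ) ^ j * (Nat.choose j k) *
            ((Nat.choose (3 * n) (2 * n + 1 + j)) * (Nat.choose (n - 1 + j) (n - 1))) := by
    rw [Finset.mul_sum]
    rw [← Finset.Ico_add_one_right_eq_Icc, Finset.sum_Ico_eq_sum_range]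
    have hr : 2 * n - 1 + 1 - n = n := by omega
    rw [hr]
    apply Finset.sum_congr rfl
    intro j _
    have e1 : n + j - n = j := by omega
    have e2 : n + 1 + (n + j) = 2 * n + 1 + j := by omega
    have e3 : n + j - 1 = n - 1 + j := by omega
    rw [e1, e2, e3]
    ring
  rw [hIcc, main]
  ring
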